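/- Let k ≥ 1 be an integer, h ≠ 0 a real number, and t₀ ∈ ℝ. For every real polynomial p of degree at most k, p′(t₀) = (1/h)·∑_{i=0}^k β_i^k p(t₀ + i²·h), where β_0^k = −∑_{j=1}^k 1/j² and β_i^k = (−1)^{k−1}·(k!)² / (i² · ∏_{0≤j≤k, j≠i} (i² − j²)) for 1 ≤ i ≤ k. -/

import Mathlib

/-- The coefficients `β_i^k` of the non-equidistant derivative approximation:
`β_0^k = -∑_{j=1}^k 1/j²` and
`β_i^k = (-1)^(k-1)·(k!)² / (i² · ∏_{0≤j≤k, j≠i} (i² − j²))` for `1 ≤ i ≤ k`. -/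
noncomputable def betaCoef (k i : ℕ) : ℝ :=
  if i = 0 then -(∑ j ∈ Finset.Icc 1 k, (1 : ℝ) / (j : ℝ) ^ 2)
  else (-1) ^ (k - 1) * ((Nat.factorial k : ℝ)) ^ 2 /
    ((i : ℝ) ^ 2 * ∏ j ∈ (Finset.range (k + 1)).erase i, ((i : ℝ) ^ 2 - (j : ℝ) ^ 2))

open Polynomial Finset

lemma polyDerivProd {ι : Type*} [DecidableEq ι] (s : Finset ι) (f : ι → Polynomial ℝ) :
    Polynomial.derivative (∏ i ∈ s, f i)
      = ∑ i ∈ s, (∏ j ∈ s.erase i, f j) * Polynomial.derivative (f i) := by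
  induction s using Finset.induction_on with
  | empty => simp
  | @insert a s ha ih =>
    have : ∀ i ∈ s, (∏ j ∈ (insert a s).erase i, f j) * Polynomial.derivative (f i)
        = f a * ((∏ j ∈ s.erase i, f j) * Polynomial.derivative (f i)) := by
      intro i hi
      have hia : i ≠ a := by rintro rfl; exact ha hi
      rw [Finset.erase_insert_of_ne hia.symm,
        Finset.prod_insert (fun h => ha (Finset.erase_subset _ _ h)), mul_assoc]
    rw [Finset.prod_insert ha, derivative_mul, ih, Finset.mul_sum, Finset.sum_insert ha,
      Finset.erase_insert ha, Finset.sum_congr rfl this, add_comm,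
      mul_comm (derivative (f a))]
    exact add_comm _ _

lemma sq_cast_inj {i a : ℕ} (h : (i:ℝ)^2 = (a:ℝ)^2) : i = a := by
  have : (i:ℝ) = a := by nlinarith [Nat.cast_nonneg (α := ℝ) i, Nat.cast_nonneg (α := ℝ) a]
  exact_mod_cast this

lemma prod_Icc_cast (k : ℕ) : ∏ a ∈ Finset.Icc 1 k, (a:ℝ) = (Nat.factorial k : ℝ) := by
  rw [← Nat.cast_prod]
  norm_cast
  rw [show Finset.Icc 1 k = Finset.Ico 1 (k+1) by rfl]
  exact Finset.prod_Ico_id_eq_factorial k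

lemma eval_deriv_basis (k : ℕ) (hk : 1 ≤ k) (i : ℕ) (hi : i ∈ Finset.range (k+1)) :
    (Polynomial.derivative (Lagrange.basis (Finset.range (k+1))
        (fun j : ℕ => (j:ℝ)^2) i)).eval 0 = betaCoef k i := by
  have hder : ∀ a b : ℝ,
      Polynomial.derivative (Lagrange.basisDivisor a b) = Polynomial.C (a-b)⁻¹ := by
    intro a b; simp [Lagrange.basisDivisor]
  have heval : ∀ a b : ℝ, (Lagrange.basisDivisor a b).eval 0 = (a-b)⁻¹ * (0-b) := by
    intro a b; simp [Lagrange.basisDivisor]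
  rw [Lagrange.basis, polyDerivProd]
  rw [Polynomial.eval_finset_sum]
  simp only [Polynomial.eval_mul, Polynomial.eval_prod, hder, heval, Polynomial.eval_C]
  by_cases hi0 : i = 0
  · subst hi0
    have h1 : ∀ j ∈ (Finset.range (k+1)).erase 0,
        (∏ a ∈ ((Finset.range (k+1)).erase 0).erase j,
          (((0:ℕ):ℝ)^2 - ((a:ℕ):ℝ)^2)⁻¹ * (0 - ((a:ℕ):ℝ)^2))
          * (((0:ℕ):ℝ)^2 - ((j:ℕ):ℝ)^2)⁻¹ = -(1 / (j:ℝ)^2) := by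
      intro j hj
      have hj0 : j ≠ 0 := (Finset.mem_erase.mp hj).1
      have hprod : (∏ a ∈ ((Finset.range (k+1)).erase 0).erase j,
          (((0:ℕ):ℝ)^2 - ((a:ℕ):ℝ)^2)⁻¹ * (0 - ((a:ℕ):ℝ)^2)) = 1 := by
        apply Finset.prod_eq_one
        intro a ha
        have ha0 : a ≠ 0 := (Finset.mem_erase.mp (Finset.mem_of_mem_erase ha)).1
        have : ((a:ℕ):ℝ)^2 ≠ 0 := by positivity
        push_cast
        rw [show (0:ℝ)^2 - (a:ℝ)^2 = -((a:ℝ)^2) by ring, zero_sub, inv_neg,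
          neg_mul_neg, inv_mul_cancel₀ this]
      rw [hprod, one_mul]
      have : ((j:ℕ):ℝ)^2 ≠ 0 := by positivity
      push_cast
      rw [show (0:ℝ)^2 - (j:ℝ)^2 = -((j:ℝ)^2) by ring, inv_neg, one_div]
    rw [Finset.sum_congr rfl h1,
      show ((Finset.range (k+1)).erase 0) = Finset.Icc 1 k by
        ext a; simp only [Finset.mem_erase, Finset.mem_range, Finset.mem_Icc]; omega,
      Finset.sum_neg_distrib]
    simp [betaCoef]
  · -- i ≠ 0
    have hik : 1 ≤ i ∧ i ≤ k := by
      constructor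
      · omega
      · have := Finset.mem_range.mp hi; omega
    have h0mem : (0:ℕ) ∈ (Finset.range (k+1)).erase i := by
      simp [Finset.mem_erase, Ne.symm hi0]
    rw [Finset.sum_eq_single_of_mem 0 h0mem]
    · -- main term
      set T := (Finset.Icc 1 k).erase i with hTdef
      have hT : ((Finset.range (k+1)).erase i).erase 0 = T := by
        ext a; simp only [hTdef, Finset.mem_erase, Finset.mem_range, Finset.mem_Icc]; omega
      have hiIcc : i ∈ Finset.Icc 1 k := Finset.mem_Icc.mpr hik
      have hcardT : T.card = k - 1 := by
        rw [hTdef, Finset.card_erase_of_mem hiIcc, Nat.card_Icc]; omega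
      have hi2 : ((i:ℕ):ℝ)^2 ≠ 0 := by positivity
      have hF : (i:ℝ)^2 * ∏ a ∈ T, ((a:ℕ):ℝ)^2 = (Nat.factorial k : ℝ)^2 := by
        rw [hTdef, Finset.mul_prod_erase (Finset.Icc 1 k) (fun a : ℕ => ((a:ℕ):ℝ)^2) hiIcc,
          Finset.prod_pow, prod_Icc_cast]
      have hA : ∏ a ∈ T, ((i:ℝ)^2 - ((a:ℕ):ℝ)^2) ≠ 0 := by
        apply Finset.prod_ne_zero_iff.mpr
        intro a ha
        have hai : a ≠ i := (Finset.mem_erase.mp ha).1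
        intro hEq
        exact hai (sq_cast_inj (by linarith [sub_eq_zero.mp hEq] : ((a:ℕ):ℝ)^2 = ((i:ℕ):ℝ)^2))
      rw [hT]
      have hneg : ∏ x ∈ T, (0 - ((x:ℕ):ℝ)^2) = (-1)^(k-1) * ∏ x ∈ T, ((x:ℕ):ℝ)^2 := by
        rw [Finset.prod_congr rfl (fun x _ => show (0:ℝ) - ((x:ℕ):ℝ)^2 = (-1) * ((x:ℕ):ℝ)^2 by ring),
          Finset.prod_mul_distrib, Finset.prod_const, hcardT]
      have hden : ∏ j ∈ (Finset.range (k+1)).erase i, ((i:ℝ)^2 - ((j:ℕ):ℝ)^2)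
          = (i:ℝ)^2 * ∏ a ∈ T, ((i:ℝ)^2 - ((a:ℕ):ℝ)^2) := by
        rw [← Finset.mul_prod_erase ((Finset.range (k+1)).erase i)
          (fun j : ℕ => ((i:ℝ)^2 - ((j:ℕ):ℝ)^2)) h0mem, hT]
        norm_num
      rw [Finset.prod_mul_distrib, hneg, betaCoef, if_neg hi0, hden]
      rw [Finset.prod_inv_distrib,
        eq_div_iff (mul_ne_zero hi2 (mul_ne_zero hi2 hA))]
      have h00 : ((0:ℕ):ℝ)^2 = 0 := by norm_num
      rw [h00, sub_zero]
      field_simp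
      linear_combination hF
    · -- other terms vanish
      intro j hj hj0
      apply mul_eq_zero_of_left
      apply Finset.prod_eq_zero (i := 0)
      · exact Finset.mem_erase.mpr ⟨Ne.symm hj0, h0mem⟩
      · norm_num

/-- For every real polynomial `p` of degree at most `k`,
`p′(t₀) = (1/h)·∑_{i=0}^k β_i^k p(t₀ + i²·h)`. -/
theorem deriv_eq_nonequidistant_combination (k : ℕ) (hk : 1 ≤ k) (h : ℝ) (hh : h ≠ 0)
    (t₀ : ℝ) (p : Polynomial ℝ) (hp : p.degree ≤ (k : ℕ)) :
    (Polynomial.derivative p).eval t₀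
      = (1 / h) * ∑ i ∈ Finset.range (k + 1),
          betaCoef k i * p.eval (t₀ + ((i : ℝ) ^ 2) * h) := by
  set v : ℕ → ℝ := fun j => (j:ℝ)^2 with hv
  set u : Polynomial ℝ := Polynomial.C h * Polynomial.X + Polynomial.C t₀ with hu
  set q : Polynomial ℝ := p.comp u with hq
  have hinj : Set.InjOn v (Finset.range (k+1)) := fun a _ b _ hab => sq_cast_inj hab
  have hudeg : u.degree = 1 := Polynomial.degree_linear hh
  have hqn : q.natDegree ≤ k := by
    rw [hq, Polynomial.natDegree_comp,
      Polynomial.natDegree_eq_of_degree_eq_some hudeg]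
    have h1 := Polynomial.natDegree_le_iff_degree_le.mpr hp
    have : (One.one : ℕ) = 1 := rfl
    rw [this, mul_one]
    exact h1
  have hdeg : q.degree < (Finset.range (k+1)).card := by
    rw [Finset.card_range]
    calc q.degree ≤ (q.natDegree : WithBot ℕ) := Polynomial.degree_le_natDegree
      _ ≤ (k : WithBot ℕ) := by exact_mod_cast hqn
      _ < ((k+1 : ℕ) : WithBot ℕ) := by exact_mod_cast Nat.lt_succ_self k
  have hinterp := Lagrange.eq_interpolate hinj hdeg
  have h2 : (Polynomial.derivative q).eval 0
      = ∑ i ∈ Finset.range (k+1), q.eval (v i) * betaCoef k i := by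
    conv_lhs => rw [hinterp]
    rw [Lagrange.interpolate_apply, Polynomial.derivative_sum, Polynomial.eval_finset_sum]
    refine Finset.sum_congr rfl fun i hi => ?_
    rw [Polynomial.derivative_C_mul, Polynomial.eval_mul, Polynomial.eval_C,
      eval_deriv_basis k hk i hi]
  have h3 : (Polynomial.derivative q).eval 0 = h * (Polynomial.derivative p).eval t₀ := by
    rw [hq, Polynomial.derivative_comp, Polynomial.eval_mul, Polynomial.eval_comp]
    have : Polynomial.derivative u = Polynomial.C h := by simp [hu]
    rw [this, Polynomial.eval_C]
    congr 1
    simp [hu]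
  have h4 : ∀ i ∈ Finset.range (k+1),
      q.eval (v i) * betaCoef k i = betaCoef k i * p.eval (t₀ + ((i:ℝ)^2) * h) := by
    intro i _
    rw [hq, Polynomial.eval_comp]
    rw [mul_comm]
    congr 2
    simp [hu, hv]
    ring
  rw [Finset.sum_congr rfl h4] at h2
  rw [← h2, h3]
  field_simp
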